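/- Fix m ≥ 1. Let F ⊆ P([m]), a ∈ [m], and A ⊆ [m]\{a}. Then Λ(F)_{(A, A∪{a})} = Σ_{B ∈ (F/{a})^{−1}({∅})} |A △ B|! · (m − 1 − |A △ B|)! − Σ_{B ∈ (F/{a})^{−1}({{a}})} |A △ B|! · (m − 1 − |A △ B|)!. -/

import Mathlib

open Finset

variable {m : ℕ}

/-- A family of finsets is intersecting if any two members meet. -/
def IsIntersecting (F : Finset (Finset (Fin m))) : Prop :=
  ∀ A ∈ F, ∀ B ∈ F, (A ∩ B).Nonempty

/-- A maximal intersecting subfamily of the power set of `Fin m`. -/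
def IsMaxIntersecting (F : Finset (Finset (Fin m))) : Prop :=
  IsIntersecting F ∧ ∀ G : Finset (Finset (Fin m)), IsIntersecting G → F ⊆ G → G ⊆ F

/-- A family is subset-closed if it contains all subsets of its members. -/
def IsSubsetClosed (F : Finset (Finset (Fin m))) : Prop :=
  ∀ A ∈ F, ∀ B ⊆ A, B ∈ F

/-- The embedding of a family into `ℝ^{P([m])}`. -/
def famVec (F : Finset (Finset (Fin m))) : Finset (Fin m) → ℝ := fun A =>
  if A ∈ F ∧ Aᶜ ∉ F then 1 else if A ∉ F ∧ Aᶜ ∈ F then -1 else 0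

/-- The standard basis vector `e_A` of `ℝ^{P([m])}`. -/
def stdBasis (A : Finset (Fin m)) : Finset (Fin m) → ℝ := fun B => if B = A then 1 else 0

/-- The star of a family centered at `a`. -/
def starFam (a : Fin m) (F : Finset (Finset (Fin m))) : Finset (Finset (Fin m)) :=
  F.filter fun A => a ∈ A

/-- The setwise complement (dual) `F* = {Aᶜ : A ∈ F}`. -/
def dualFam (F : Finset (Finset (Fin m))) : Finset (Finset (Fin m)) :=
  F.image fun A => Aᶜ

/-- `Tpath σ C k = C △ {σ(1), …, σ(k)}` (0-indexed: the images of the first `k` indices). -/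
def Tpath (σ : Equiv.Perm (Fin m)) (C : Finset (Fin m)) (k : ℕ) : Finset (Fin m) :=
  symmDiff C ((Finset.univ.filter fun i : Fin m => (i : ℕ) < k).image σ)

/-- The path-sum `Λ(H)` as a vector in `ℝ^{P([m]) × P([m])}`: at coordinate `(X, Y)` it is the
number of triples `(σ, C, k)` whose `k`-th path step goes from `X` to `Y`, minus the number of
triples whose `k`-th step goes from `Y` to `X`. -/
def LamW (H : Finset (Finset (Fin m))) (X Y : Finset (Fin m)) : ℝ :=
  ∑ σ : Equiv.Perm (Fin m), ∑ C ∈ H, ∑ k ∈ Finset.Icc 1 m,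
    ((if Tpath σ C (k - 1) = X ∧ Tpath σ C k = Y then (1 : ℝ) else 0)
      - (if Tpath σ C (k - 1) = Y ∧ Tpath σ C k = X then (1 : ℝ) else 0))

/-- A maximal intersecting family `F` is `∅`-minimal if for every `a`, the coordinate
`Λ(F*)_{(∅,{a})}` is the minimum of `Λ(F*)_{(A, A ∪ {a})}` over all `A ⊆ [m] \ {a}`. -/
def EmptyMinimal (F : Finset (Finset (Fin m))) : Prop :=
  ∀ a : Fin m, ∀ A : Finset (Fin m), a ∉ A →
    LamW (dualFam F) ∅ {a} ≤ LamW (dualFam F) A (insert a A)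

/-- `(F/{a})⁻¹({∅}) = {B ⊆ [m] \ {a} : B ∈ F ∧ B ∪ {a} ∉ F}`. -/
def preEmpty (F : Finset (Finset (Fin m))) (a : Fin m) : Finset (Finset (Fin m)) :=
  Finset.univ.filter fun B => a ∉ B ∧ B ∈ F ∧ insert a B ∉ F

/-- `(F/{a})⁻¹({{a}}) = {B ⊆ [m] \ {a} : B ∉ F ∧ B ∪ {a} ∈ F}`. -/
def preSingleton (F : Finset (Finset (Fin m))) (a : Fin m) : Finset (Finset (Fin m)) :=
  Finset.univ.filter fun B => a ∉ B ∧ B ∉ F ∧ insert a B ∈ F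



lemma filt_card (k : ℕ) (hk : k ≤ m) :
    ((univ : Finset (Fin m)).filter fun i : Fin m => (i : ℕ) < k).card = k := by
  have h : ((univ : Finset (Fin m)).filter fun i : Fin m => (i : ℕ) < k)
      = (Finset.range k).attachFin (fun n hn => lt_of_lt_of_le (Finset.mem_range.mp hn) hk) := by
    ext i; simp
  rw [h, Finset.card_attachFin, Finset.card_range]

lemma card_perm_comp {α ι : Type*} [Fintype α] [DecidableEq α] [Fintype ι] [DecidableEq ι]
    (p q : α → ι) (h : ∀ i, Fintype.card {x // p x = i} = Fintype.card {x // q x = i}) :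
    Fintype.card {σ : Equiv.Perm α // q ∘ σ = p}
      = ∏ i, (Fintype.card {x // q x = i}).factorial := by
  have e : ∀ i, {x // p x = i} ≃ {x // q x = i} := fun i => Fintype.equivOfCardEq (h i)
  let τ : Equiv.Perm α := Equiv.ofFiberEquiv e
  have hτ : ∀ x, q (τ x) = p x := fun x => Equiv.ofFiberEquiv_map e x
  have key : Fintype.card {σ : Equiv.Perm α // q ∘ σ = p}
      = Fintype.card {g : Equiv.Perm α // q ∘ g = q} := by
    refine Fintype.card_congr ((Equiv.mulRight τ⁻¹).subtypeEquiv fun σ => ?_)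
    constructor
    · intro hσ
      funext x
      have h1 : q (σ (τ⁻¹ x)) = p (τ⁻¹ x) := congrFun hσ (τ⁻¹ x)
      have h2 : q (τ (τ⁻¹ x)) = p (τ⁻¹ x) := hτ _
      show q (σ (τ⁻¹ x)) = q x
      rw [h1, ← h2]; simp
    · intro hσ
      funext x
      have h1 : q (σ (τ⁻¹ (τ x))) = q (τ x) := congrFun hσ (τ x)
      simpa [hτ x] using h1
  rw [key]
  exact DomMulAct.stabilizer_card q

/-- Three-valued classifier: 0 on `s`, 1 at `x0`, 2 elsewhere. -/
def cls (s : Finset (Fin m)) (x0 : Fin m) (x : Fin m) : Fin 3 :=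
  if x ∈ s then 0 else if x = x0 then 1 else 2

lemma cls_eq_zero_iff {s : Finset (Fin m)} {x0 x : Fin m} : cls s x0 x = 0 ↔ x ∈ s := by
  unfold cls
  by_cases h1 : x ∈ s
  · simp [h1]
  · by_cases h2 : x = x0 <;> simp [h1, h2] <;> decide

lemma cls_eq_one_iff {s : Finset (Fin m)} {x0 x : Fin m} (h : x0 ∉ s) :
    cls s x0 x = 1 ↔ x = x0 := by
  unfold cls
  by_cases h1 : x ∈ s
  · simp only [if_pos h1]
    constructor
    · intro h0; exact absurd h0 (by decide)
    · rintro rfl; exact absurd h1 h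
  · by_cases h2 : x = x0 <;> simp [h1, h2, h] <;> decide

lemma cls_eq_two_iff {s : Finset (Fin m)} {x0 x : Fin m} :
    cls s x0 x = 2 ↔ (x ∉ s ∧ x ≠ x0) := by
  unfold cls
  by_cases h1 : x ∈ s
  · simp only [if_pos h1]
    constructor
    · intro h0; exact absurd h0 (by decide)
    · rintro ⟨h3, _⟩; exact absurd h1 h3
  · by_cases h2 : x = x0
    · subst h2
      simp only [if_neg h1, if_pos rfl]
      constructor
      · intro h0; exact absurd h0 (by decide)
      · rintro ⟨_, h3⟩; exact absurd rfl h3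
    · simp [h1, h2]

lemma cls_fiber0 (s : Finset (Fin m)) (x0 : Fin m) :
    (univ.filter fun x => cls s x0 x = 0) = s := by
  ext x; simp [cls_eq_zero_iff]

lemma cls_fiber1 (s : Finset (Fin m)) (x0 : Fin m) (h : x0 ∉ s) :
    (univ.filter fun x => cls s x0 x = 1) = {x0} := by
  ext x; simp [cls_eq_one_iff h]

lemma cls_fiber2 (s : Finset (Fin m)) (x0 : Fin m) :
    (univ.filter fun x => cls s x0 x = 2) = (insert x0 s)ᶜ := by
  ext x; simp [cls_eq_two_iff, and_comm]

lemma count_j (a : Fin m) (S : Finset (Fin m)) (j : Fin m) (haS : a ∉ S)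
    (hcard : S.card = (j : ℕ)) :
    Fintype.card {σ : Equiv.Perm (Fin m) //
        σ j = a ∧ ((univ.filter fun i : Fin m => (i : ℕ) < (j : ℕ)).image σ) = S}
      = (S.card).factorial * (m - 1 - S.card).factorial := by
  classical
  have hDcard : ((univ : Finset (Fin m)).filter fun i : Fin m => (i : ℕ) < (j : ℕ)).card
      = (j : ℕ) := filt_card _ (le_of_lt j.isLt)
  set D : Finset (Fin m) := univ.filter fun i : Fin m => (i : ℕ) < (j : ℕ) with hD
  have hjD : j ∉ D := by simp [hD]
  have hcards : ∀ i : Fin 3,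
      Fintype.card {x // cls D j x = i} = Fintype.card {x // cls S a x = i} := by
    have c0 : Fintype.card {x // cls D j x = (0 : Fin 3)}
        = Fintype.card {x // cls S a x = (0 : Fin 3)} := by
      rw [Fintype.card_subtype, Fintype.card_subtype, cls_fiber0, cls_fiber0, hDcard, hcard]
    have c1 : Fintype.card {x // cls D j x = (1 : Fin 3)}
        = Fintype.card {x // cls S a x = (1 : Fin 3)} := by
      rw [Fintype.card_subtype, Fintype.card_subtype, cls_fiber1 _ _ hjD, cls_fiber1 _ _ haS,
        Finset.card_singleton, Finset.card_singleton]
    have c2 : Fintype.card {x // cls D j x = (2 : Fin 3)}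
        = Fintype.card {x // cls S a x = (2 : Fin 3)} := by
      rw [Fintype.card_subtype, Fintype.card_subtype, cls_fiber2, cls_fiber2,
        Finset.card_compl, Finset.card_compl, Finset.card_insert_of_notMem hjD,
        Finset.card_insert_of_notMem haS, hDcard, hcard]
    intro i
    fin_cases i
    · exact c0
    · exact c1
    · exact c2
  have hiff : ∀ σ : Equiv.Perm (Fin m),
      (σ j = a ∧ D.image σ = S) ↔ cls S a ∘ σ = cls D j := by
    intro σ
    constructor
    · rintro ⟨hja, him⟩
      funext x
      by_cases hx : x ∈ D
      · have hmem : σ x ∈ S := him ▸ Finset.mem_image_of_mem σ hx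
        rw [Function.comp_apply, cls_eq_zero_iff.mpr hmem, (cls_eq_zero_iff.mpr hx).symm]
      · by_cases hxj : x = j
        · subst hxj
          rw [Function.comp_apply, hja, (cls_eq_one_iff haS).mpr rfl,
            ((cls_eq_one_iff hx).mpr rfl).symm]
        · have h1 : σ x ∉ S := by
            rw [← him]
            intro hmem
            obtain ⟨d, hd, hdx⟩ := Finset.mem_image.mp hmem
            exact hx ((σ.injective hdx) ▸ hd)
          have h2 : σ x ≠ a := fun h => hxj (σ.injective (h.trans hja.symm))
          rw [Function.comp_apply, cls_eq_two_iff.mpr ⟨h1, h2⟩,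
            (cls_eq_two_iff.mpr ⟨hx, hxj⟩).symm]
    · intro hqp
      have hja : σ j = a := by
        have h1 : cls S a (σ j) = cls D j j := congrFun hqp j
        rw [(cls_eq_one_iff hjD).mpr rfl] at h1
        exact (cls_eq_one_iff haS).mp h1
      refine ⟨hja, ?_⟩
      have hsub : D.image σ ⊆ S := by
        intro y hy
        obtain ⟨d, hd, hdy⟩ := Finset.mem_image.mp hy
        have h1 : cls S a (σ d) = cls D j d := congrFun hqp d
        rw [cls_eq_zero_iff.mpr hd] at h1
        exact hdy ▸ cls_eq_zero_iff.mp h1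
      refine Finset.eq_of_subset_of_card_le hsub ?_
      rw [Finset.card_image_of_injective _ σ.injective, hDcard, hcard]
  have hmain := card_perm_comp (cls D j) (cls S a) hcards
  rw [Fintype.card_congr (Equiv.subtypeEquivRight hiff), hmain]
  have c0 : Fintype.card {x // cls S a x = (0 : Fin 3)} = S.card := by
    rw [Fintype.card_subtype, cls_fiber0]
  have c1 : Fintype.card {x // cls S a x = (1 : Fin 3)} = 1 := by
    rw [Fintype.card_subtype, cls_fiber1 _ _ haS, Finset.card_singleton]
  have c2 : Fintype.card {x // cls S a x = (2 : Fin 3)} = m - 1 - S.card := by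
    rw [Fintype.card_subtype, cls_fiber2, Finset.card_compl,
      Finset.card_insert_of_notMem haS, Fintype.card_fin]
    omega
  rw [Fin.prod_univ_three, c0, c1, c2]
  simp

lemma count_core (a : Fin m) (S : Finset (Fin m)) :
    (∑ σ : Equiv.Perm (Fin m), ∑ j : Fin m,
      (if σ j = a ∧ ((univ.filter fun i : Fin m => (i : ℕ) < (j : ℕ)).image σ) = S
        then (1 : ℝ) else 0))
    = if a ∈ S then 0 else ((S.card).factorial * (m - 1 - S.card).factorial : ℝ) := by
  classical
  rw [Finset.sum_comm]
  by_cases haS : a ∈ S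
  · rw [if_pos haS]
    refine Finset.sum_eq_zero fun j _ => Finset.sum_eq_zero fun σ _ => ?_
    rw [if_neg]
    rintro ⟨hja, him⟩
    rw [← him] at haS
    obtain ⟨d, hd, hdx⟩ := Finset.mem_image.mp haS
    have hdj : d = j := σ.injective (hdx.trans hja.symm)
    subst hdj
    exact absurd (Finset.mem_filter.mp hd).2 (lt_irrefl _)
  · rw [if_neg haS]
    have hSm : S.card < m := by
      have h1 : S ⊆ univ.erase a := fun x hx =>
        Finset.mem_erase.mpr ⟨fun h => haS (h ▸ hx), Finset.mem_univ x⟩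
      have h2 := Finset.card_le_card h1
      rw [Finset.card_erase_of_mem (Finset.mem_univ a), Finset.card_univ, Fintype.card_fin] at h2
      have hm := a.pos
      omega
    have step : ∀ j : Fin m,
        (∑ σ : Equiv.Perm (Fin m),
          (if σ j = a ∧ ((univ.filter fun i : Fin m => (i : ℕ) < (j : ℕ)).image σ) = S
            then (1 : ℝ) else 0))
        = if j = (⟨S.card, hSm⟩ : Fin m)
            then ((S.card).factorial * (m - 1 - S.card).factorial : ℝ) else 0 := by
      intro j
      by_cases hj : j = (⟨S.card, hSm⟩ : Fin m)
      · rw [if_pos hj]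
        have hjc : S.card = (j : ℕ) := by rw [hj]
        rw [Finset.sum_boole]
        rw [show ({σ : Equiv.Perm (Fin m) |
            σ j = a ∧ ((univ.filter fun i : Fin m => (i : ℕ) < (j : ℕ)).image σ) = S} : Finset _)
          = (univ.filter fun σ : Equiv.Perm (Fin m) =>
            σ j = a ∧ ((univ.filter fun i : Fin m => (i : ℕ) < (j : ℕ)).image σ) = S) from rfl]
        rw [← Fintype.card_subtype, count_j a S j haS hjc]
        push_cast
        ring
      · rw [if_neg hj]
        refine Finset.sum_eq_zero fun σ _ => ?_
        rw [if_neg]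
        rintro ⟨hja, him⟩
        apply hj
        have hc : S.card = (j : ℕ) := by
          rw [← him, Finset.card_image_of_injective _ σ.injective,
            filt_card _ (le_of_lt j.isLt)]
        exact Fin.ext hc.symm
    rw [Finset.sum_congr rfl fun j _ => step j, Finset.sum_ite_eq' univ _ _,
      if_pos (Finset.mem_univ _)]

lemma sd1 {A : Finset (Fin m)} {a : Fin m} (hA : a ∉ A) (x : Fin m) :
    symmDiff A {x} = insert a A ↔ x = a := by
  constructor
  · intro h
    have ha2 : a ∈ symmDiff A {x} := h ▸ Finset.mem_insert_self a A
    rw [Finset.mem_symmDiff] at ha2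
    rcases ha2 with ⟨h1, _⟩ | ⟨h1, _⟩
    · exact absurd h1 hA
    · exact (Finset.mem_singleton.mp h1).symm
  · rintro rfl
    ext y
    by_cases hy : y = x <;> simp [Finset.mem_symmDiff, hy, hA]

lemma sd2 {A : Finset (Fin m)} {a : Fin m} (hA : a ∉ A) (x : Fin m) :
    symmDiff (insert a A) {x} = A ↔ x = a := by
  constructor
  · intro h
    by_contra hxa
    have ha2 : a ∈ symmDiff (insert a A) {x} := by
      rw [Finset.mem_symmDiff]
      exact Or.inl ⟨Finset.mem_insert_self a A, fun hs =>
        hxa ((Finset.mem_singleton.mp hs).symm)⟩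
    exact hA (h ▸ ha2)
  · rintro rfl
    ext y
    by_cases hy : y = x <;> simp [Finset.mem_symmDiff, hy, hA]

lemma sd3 {A B : Finset (Fin m)} {a : Fin m} (hA : a ∉ A) (hB : a ∉ B) :
    symmDiff (insert a B) (insert a A) = symmDiff B A := by
  ext y
  by_cases hy : y = a <;> simp [Finset.mem_symmDiff, hy, hA, hB]

lemma tpath_succ (σ : Equiv.Perm (Fin m)) (C : Finset (Fin m)) (j : Fin m) :
    Tpath σ C ((j : ℕ) + 1) = symmDiff (Tpath σ C (j : ℕ)) {σ j} := by
  unfold Tpath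
  have hfilt : (univ.filter fun i : Fin m => (i : ℕ) < (j : ℕ) + 1)
      = insert j (univ.filter fun i : Fin m => (i : ℕ) < (j : ℕ)) := by
    ext i
    simp [Nat.lt_succ_iff_lt_or_eq, Fin.ext_iff, or_comm]
    simp only [Fin.le_iff_val_le_val, Fin.lt_iff_val_lt_val]; omega
  have hσj : σ j ∉ (univ.filter fun i : Fin m => (i : ℕ) < (j : ℕ)).image σ := by
    simp only [Finset.mem_image, Finset.mem_filter, Finset.mem_univ, true_and, not_exists]
    rintro x ⟨hx, heq⟩
    exact absurd ((σ.injective heq) ▸ hx) (lt_irrefl _)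
  have hins : insert (σ j) ((univ.filter fun i : Fin m => (i : ℕ) < (j : ℕ)).image σ)
      = symmDiff ((univ.filter fun i : Fin m => (i : ℕ) < (j : ℕ)).image σ) {σ j} := by
    ext y
    by_cases hy : y = σ j <;> simp [Finset.mem_symmDiff, hy, hσj]
  rw [hfilt, Finset.image_insert, hins, ← symmDiff_assoc]

lemma tpath_eq_iff (σ : Equiv.Perm (Fin m)) (C X : Finset (Fin m)) (k : ℕ) :
    Tpath σ C k = X ↔ (univ.filter fun i : Fin m => (i : ℕ) < k).image σ = symmDiff C X := by
  unfold Tpath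
  constructor
  · intro h; rw [← h, symmDiff_symmDiff_cancel_left]
  · intro h; rw [h, symmDiff_symmDiff_cancel_left]

/-- Formula for the coordinate `Λ(F)_{(A, A ∪ {a})}` in terms of the fibers of `F/{a}`. -/
theorem lam_formula (m : ℕ) (hm : 1 ≤ m) (F : Finset (Finset (Fin m))) (a : Fin m)
    (A : Finset (Fin m)) (hA : a ∉ A) :
    LamW F A (insert a A)
      = (∑ B ∈ preEmpty F a,
            ((symmDiff A B).card.factorial * (m - 1 - (symmDiff A B).card).factorial : ℝ))
        - ∑ B ∈ preSingleton F a,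
            ((symmDiff A B).card.factorial * (m - 1 - (symmDiff A B).card).factorial : ℝ) := by
  classical
  have cond1 : ∀ (σ : Equiv.Perm (Fin m)) (C : Finset (Fin m)) (j : Fin m),
      (Tpath σ C (j : ℕ) = A ∧ Tpath σ C ((j : ℕ) + 1) = insert a A)
      ↔ (σ j = a ∧
          (univ.filter fun i : Fin m => (i : ℕ) < (j : ℕ)).image σ = symmDiff C A) := by
    intro σ C j
    rw [tpath_succ]
    constructor
    · rintro ⟨h1, h2⟩
      rw [h1] at h2
      exact ⟨(sd1 hA _).mp h2, (tpath_eq_iff σ C A _).mp h1⟩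
    · rintro ⟨h1, h2⟩
      have h3 : Tpath σ C (j : ℕ) = A := (tpath_eq_iff σ C A _).mpr h2
      refine ⟨h3, ?_⟩
      rw [h3, h1]
      exact (sd1 hA a).mpr rfl
  have cond2 : ∀ (σ : Equiv.Perm (Fin m)) (C : Finset (Fin m)) (j : Fin m),
      (Tpath σ C (j : ℕ) = insert a A ∧ Tpath σ C ((j : ℕ) + 1) = A)
      ↔ (σ j = a ∧
          (univ.filter fun i : Fin m => (i : ℕ) < (j : ℕ)).image σ
            = symmDiff C (insert a A)) := by
    intro σ C j
    rw [tpath_succ]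
    constructor
    · rintro ⟨h1, h2⟩
      rw [h1] at h2
      exact ⟨(sd2 hA _).mp h2, (tpath_eq_iff σ C (insert a A) _).mp h1⟩
    · rintro ⟨h1, h2⟩
      have h3 : Tpath σ C (j : ℕ) = insert a A := (tpath_eq_iff σ C (insert a A) _).mpr h2
      refine ⟨h3, ?_⟩
      rw [h3, h1]
      exact (sd2 hA a).mpr rfl
  have hLam : LamW F A (insert a A)
      = (∑ σ : Equiv.Perm (Fin m), ∑ C ∈ F, ∑ j : Fin m,
          ((if σ j = a ∧
              (univ.filter fun i : Fin m => (i : ℕ) < (j : ℕ)).image σ = symmDiff C A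
              then (1 : ℝ) else 0)
            - (if σ j = a ∧
              (univ.filter fun i : Fin m => (i : ℕ) < (j : ℕ)).image σ
                = symmDiff C (insert a A)
              then (1 : ℝ) else 0))) := by
    unfold LamW
    refine Finset.sum_congr rfl fun σ _ => Finset.sum_congr rfl fun C _ => ?_
    rw [← Finset.Ico_add_one_right_eq_Icc, Finset.sum_Ico_eq_sum_range]
    simp only [Nat.succ_sub_one, Nat.add_sub_cancel]
    rw [← Fin.sum_univ_eq_sum_range]
    refine Finset.sum_congr rfl fun j _ => ?_
    rw [Nat.add_comm 1 (j : ℕ)]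
    simp only [Nat.add_sub_cancel]
    rw [if_congr (cond1 σ C j) rfl rfl, if_congr (cond2 σ C j) rfl rfl]
  rw [hLam]
  simp only [Finset.sum_sub_distrib]
  have hG1 : (∑ σ : Equiv.Perm (Fin m), ∑ C ∈ F, ∑ j : Fin m,
        (if σ j = a ∧
            (univ.filter fun i : Fin m => (i : ℕ) < (j : ℕ)).image σ = symmDiff C A
          then (1 : ℝ) else 0))
      = ∑ C ∈ F, (if a ∈ symmDiff C A then 0
          else ((symmDiff C A).card.factorial
            * (m - 1 - (symmDiff C A).card).factorial : ℝ)) := by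
    rw [Finset.sum_comm]
    exact Finset.sum_congr rfl fun C _ => count_core a (symmDiff C A)
  have hG2 : (∑ σ : Equiv.Perm (Fin m), ∑ C ∈ F, ∑ j : Fin m,
        (if σ j = a ∧
            (univ.filter fun i : Fin m => (i : ℕ) < (j : ℕ)).image σ
              = symmDiff C (insert a A)
          then (1 : ℝ) else 0))
      = ∑ C ∈ F, (if a ∈ symmDiff C (insert a A) then 0
          else ((symmDiff C (insert a A)).card.factorial
            * (m - 1 - (symmDiff C (insert a A)).card).factorial : ℝ)) := by
    rw [Finset.sum_comm]
    exact Finset.sum_congr rfl fun C _ => count_core a (symmDiff C (insert a A))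
  rw [hG1, hG2]
  have ha1 : ∀ C : Finset (Fin m), a ∈ symmDiff C A ↔ a ∈ C := by
    intro C; simp [Finset.mem_symmDiff, hA]
  have ha2 : ∀ C : Finset (Fin m), a ∈ symmDiff C (insert a A) ↔ a ∉ C := by
    intro C; simp [Finset.mem_symmDiff]
  -- rewrite conditions
  have hG1' : (∑ C ∈ F, (if a ∈ symmDiff C A then 0
        else ((symmDiff C A).card.factorial
          * (m - 1 - (symmDiff C A).card).factorial : ℝ)))
      = ∑ C ∈ F.filter (fun C => a ∉ C),
          ((symmDiff C A).card.factorial * (m - 1 - (symmDiff C A).card).factorial : ℝ) := by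
    rw [Finset.sum_filter]
    refine Finset.sum_congr rfl fun C _ => ?_
    rw [if_congr (ha1 C) rfl rfl, ← ite_not]
  have hG2' : (∑ C ∈ F, (if a ∈ symmDiff C (insert a A) then 0
        else ((symmDiff C (insert a A)).card.factorial
          * (m - 1 - (symmDiff C (insert a A)).card).factorial : ℝ)))
      = ∑ B ∈ univ.filter (fun B => a ∉ B ∧ insert a B ∈ F),
          ((symmDiff B A).card.factorial * (m - 1 - (symmDiff B A).card).factorial : ℝ) := by
    have h1 : (∑ C ∈ F, (if a ∈ symmDiff C (insert a A) then 0
          else ((symmDiff C (insert a A)).card.factorial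
            * (m - 1 - (symmDiff C (insert a A)).card).factorial : ℝ)))
        = ∑ C ∈ F.filter (fun C => a ∈ C),
            ((symmDiff C (insert a A)).card.factorial
              * (m - 1 - (symmDiff C (insert a A)).card).factorial : ℝ) := by
      rw [Finset.sum_filter]
      refine Finset.sum_congr rfl fun C _ => ?_
      rw [if_congr (ha2 C) rfl rfl, ← ite_not]
      simp only [not_not]
    rw [h1]
    refine Finset.sum_nbij' (fun C => C.erase a) (fun B => insert a B) ?_ ?_ ?_ ?_ ?_
    · intro C hC
      rw [Finset.mem_filter] at hC
      rw [Finset.mem_filter]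
      exact ⟨Finset.mem_univ _, Finset.notMem_erase a C,
        by rw [Finset.insert_erase hC.2]; exact hC.1⟩
    · intro B hB
      rw [Finset.mem_filter] at hB
      rw [Finset.mem_filter]
      exact ⟨hB.2.2, Finset.mem_insert_self a B⟩
    · intro C hC
      rw [Finset.mem_filter] at hC
      exact Finset.insert_erase hC.2
    · intro B hB
      rw [Finset.mem_filter] at hB
      exact Finset.erase_insert hB.2.1
    · intro C hC
      rw [Finset.mem_filter] at hC
      have hrw : symmDiff C (insert a A) = symmDiff (C.erase a) A := by
        conv_lhs => rw [← Finset.insert_erase hC.2]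
        exact sd3 hA (Finset.notMem_erase a C)
      rw [hrw]
  rw [hG1', hG2']
  -- split both sums by membership of insert a C / C in F
  rw [← Finset.sum_filter_add_sum_filter_not (F.filter fun C => a ∉ C)
      (fun C => insert a C ∈ F)
      (fun C => ((symmDiff C A).card.factorial
        * (m - 1 - (symmDiff C A).card).factorial : ℝ))]
  rw [← Finset.sum_filter_add_sum_filter_not
      (univ.filter fun B => a ∉ B ∧ insert a B ∈ F) (fun B => B ∈ F)
      (fun B => ((symmDiff B A).card.factorial
        * (m - 1 - (symmDiff B A).card).factorial : ℝ))]
  have e1 : (F.filter fun C => a ∉ C).filter (fun C => ¬ insert a C ∈ F) = preEmpty F a := by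
    ext C
    simp only [preEmpty, Finset.mem_filter, Finset.mem_univ, true_and]
    tauto
  have e2 : ((univ : Finset (Finset (Fin m))).filter
      fun B => a ∉ B ∧ insert a B ∈ F).filter (fun B => ¬ B ∈ F) = preSingleton F a := by
    ext B
    simp only [preSingleton, Finset.mem_filter, Finset.mem_univ, true_and]
    tauto
  have e3 : ((univ : Finset (Finset (Fin m))).filter
      fun B => a ∉ B ∧ insert a B ∈ F).filter (fun B => B ∈ F)
      = (F.filter fun C => a ∉ C).filter (fun C => insert a C ∈ F) := by
    ext B
    simp only [Finset.mem_filter, Finset.mem_univ, true_and]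
    tauto
  rw [e1, e2, e3]
  have hsd : ∀ s : Finset (Finset (Fin m)),
      (∑ B ∈ s, ((symmDiff B A).card.factorial
        * (m - 1 - (symmDiff B A).card).factorial : ℝ))
      = ∑ B ∈ s, ((symmDiff A B).card.factorial
        * (m - 1 - (symmDiff A B).card).factorial : ℝ) := by
    intro s
    refine Finset.sum_congr rfl fun B _ => ?_
    rw [symmDiff_comm]
  rw [hsd, hsd, hsd]
  ring
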